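/- Let D = (E, F) be a delta-matroid and e ∈ E with primal type p (i.e., some minimum-cardinality feasible set contains e). Then the minimum feasible-set size of D^{*|e} is r(D_min) − 1; moreover e lies in no set of F_min(D^{*|e}) ∪ F_{min+1}(D^{*|e}) (primal type u in D^{*|e}), and e lies in some minimum-cardinality feasible set of D^{×|e} (primal type p in D^{×|e}). -/
import Mathlib


open Finset Polynomial

variable {α : Type*} [DecidableEq α]

/-- The twist of a collection of feasible sets with respect to `A`. -/
noncomputable def SS.twist (A : Finset α) (F : Finset (Finset α)) : Finset (Finset α) :=
  F.image (fun X => symmDiff A X)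

/-- Loop complementation at a single element `e`. -/
noncomputable def SS.lc (e : α) (F : Finset (Finset α)) : Finset (Finset α) :=
  symmDiff F ((F.filter (fun X => e ∉ X)).image (insert e))

/-- The two generating operations: twist `*` and loop complementation `×`. -/
inductive SS.Op | star | cross

/-- Apply a single operation at a single element. -/
noncomputable def SS.opElem : SS.Op → α → Finset (Finset α) → Finset (Finset α)
  | .star, e, F => SS.twist {e} F
  | .cross, e, F => SS.lc e F

/-- Apply a word in `{*, ×}` at a single element. -/
noncomputable def SS.wordElem (w : List SS.Op) (e : α) (F : Finset (Finset α)) : Finset (Finset α) :=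
  w.foldl (fun F o => SS.opElem o e F) F

/-- Apply a word in `{*, ×}` elementwise on a subset `A`. -/
noncomputable def SS.wordOn (w : List SS.Op) (A : Finset α) (F : Finset (Finset α)) : Finset (Finset α) :=
  A.toList.foldl (fun F e => SS.wordElem w e F) F

/-- Size of a largest feasible set. -/
noncomputable def SS.rmax (F : Finset (Finset α)) : ℕ := F.sup Finset.card

/-- Size of a smallest feasible set. -/
noncomputable def SS.rmin (F : Finset (Finset α)) : ℕ := sInf (Finset.card '' (F : Set (Finset α)))

/-- The width of a set system. -/
noncomputable def SS.width (F : Finset (Finset α)) : ℕ := SS.rmax F - SS.rmin F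

/-- The minimum-cardinality feasible sets. -/
noncomputable def SS.Fmin (F : Finset (Finset α)) : Finset (Finset α) :=
  F.filter (fun X => X.card = SS.rmin F)

/-- The maximum-cardinality feasible sets. -/
noncomputable def SS.Fmax (F : Finset (Finset α)) : Finset (Finset α) :=
  F.filter (fun X => X.card = SS.rmax F)

/-- The partial-`w` polynomial of a set system with ground set `E`. -/
noncomputable def SS.poly (w : List SS.Op) (E : Finset α) (F : Finset (Finset α)) :
    Polynomial ℤ :=
  ∑ A ∈ E.powerset, (Polynomial.X : Polynomial ℤ) ^ SS.width (SS.wordOn w A F)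

/-- A proper set system satisfying the symmetric exchange axiom. -/
noncomputable def SS.IsDeltaMatroid (F : Finset (Finset α)) : Prop :=
  F.Nonempty ∧ ∀ X ∈ F, ∀ Y ∈ F, ∀ u ∈ symmDiff X Y,
    ∃ v ∈ symmDiff X Y, symmDiff X {u, v} ∈ F

/-- Apply a sequence of single-element twists and loop complementations. -/
noncomputable def SS.seqApply : List (SS.Op × α) → Finset (Finset α) → Finset (Finset α)
  | [], F => F
  | (o, e) :: s, F => SS.seqApply s (SS.opElem o e F)

/-- A set system is vf-safe if every sequence of single-element twists and loop
complementations yields a delta-matroid. -/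
noncomputable def SS.VfSafe (F : Finset (Finset α)) : Prop :=
  ∀ s : List (SS.Op × α), SS.IsDeltaMatroid (SS.seqApply s F)

/-- The direct sum of two set systems. -/
noncomputable def SS.dsum (F F' : Finset (Finset α)) : Finset (Finset α) :=
  (F ×ˢ F').image (fun p => p.1 ∪ p.2)

open SS

lemma SS.rmin_le {F : Finset (Finset α)} {X : Finset α} (hX : X ∈ F) :
    SS.rmin F ≤ X.card :=
  Nat.sInf_le ⟨X, hX, rfl⟩

lemma SS.rmin_eq {F : Finset (Finset α)} {X : Finset α} (hX : X ∈ F)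
    (h : ∀ Y ∈ F, X.card ≤ Y.card) : SS.rmin F = X.card :=
  le_antisymm (SS.rmin_le hX)
    (le_csInf ⟨X.card, X, hX, rfl⟩ (by rintro n ⟨Y, hY, rfl⟩; exact h Y hY))

lemma SS.symmDiff_singleton_mem {e : α} {X : Finset α} (h : e ∈ X) :
    symmDiff ({e} : Finset α) X = X.erase e := by
  ext a
  by_cases hae : a = e <;> simp [Finset.mem_symmDiff, hae, h]

lemma SS.symmDiff_singleton_notMem {e : α} {X : Finset α} (h : e ∉ X) :
    symmDiff ({e} : Finset α) X = insert e X := by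
  ext a
  by_cases hae : a = e <;> simp [Finset.mem_symmDiff, hae, h]

theorem stmt12 (F : Finset (Finset α)) (hD : SS.IsDeltaMatroid F) (e : α)
    (hp : ∃ A ∈ SS.Fmin F, e ∈ A) :
    SS.rmin (SS.twist {e} F) + 1 = SS.rmin F ∧
    (∀ B ∈ SS.twist {e} F, B.card ≤ SS.rmin (SS.twist {e} F) + 1 → e ∉ B) ∧
    (∃ B ∈ SS.Fmin (SS.lc e F), e ∈ B) := by
  obtain ⟨A, hAF, hAe⟩ := hp
  rw [SS.Fmin, Finset.mem_filter] at hAF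
  obtain ⟨hA, hAcard⟩ := hAF
  have hrm1 : 1 ≤ SS.rmin F := by
    rw [← hAcard]; exact Finset.card_pos.mpr ⟨e, hAe⟩
  have hmem : A.erase e ∈ SS.twist {e} F :=
    Finset.mem_image.mpr ⟨A, hA, SS.symmDiff_singleton_mem hAe⟩
  have hcardAe : (A.erase e).card = SS.rmin F - 1 := by
    rw [Finset.card_erase_of_mem hAe, hAcard]
  have htw : SS.rmin (SS.twist {e} F) = SS.rmin F - 1 := by
    rw [SS.rmin_eq hmem ?_, hcardAe]
    intro Y hY
    obtain ⟨X, hX, rfl⟩ := Finset.mem_image.mp hY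
    have hXr := SS.rmin_le hX
    by_cases hx : e ∈ X
    · rw [SS.symmDiff_singleton_mem hx, Finset.card_erase_of_mem hx, hcardAe]
      omega
    · rw [SS.symmDiff_singleton_notMem hx, Finset.card_insert_of_notMem hx, hcardAe]
      omega
  refine ⟨by omega, ?_, ?_⟩
  · intro B hB hcard heB
    obtain ⟨X, hX, rfl⟩ := Finset.mem_image.mp hB
    have heX : e ∉ X := by
      intro h
      have := Finset.mem_symmDiff.mp heB
      simp [h] at this
    rw [SS.symmDiff_singleton_notMem heX, Finset.card_insert_of_notMem heX, htw] at hcard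
    have := SS.rmin_le hX
    omega
  · have hAlc : A ∈ SS.lc e F := by
      rw [SS.lc, Finset.mem_symmDiff]
      left
      refine ⟨hA, ?_⟩
      intro hmemI
      obtain ⟨X, hX, hinsX⟩ := Finset.mem_image.mp hmemI
      obtain ⟨hXF, hXe⟩ := Finset.mem_filter.mp hX
      have h1 : X.card + 1 = A.card := by
        rw [← hinsX, Finset.card_insert_of_notMem hXe]
      have := SS.rmin_le hXF
      omega
    refine ⟨A, ?_, hAe⟩
    rw [SS.Fmin, Finset.mem_filter]
    refine ⟨hAlc, ?_⟩
    rw [SS.rmin_eq hAlc ?_]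
    intro Y hY
    rw [SS.lc, Finset.mem_symmDiff] at hY
    rcases hY with ⟨hYF, -⟩ | ⟨hYI, -⟩
    · rw [hAcard]; exact SS.rmin_le hYF
    · obtain ⟨X, hX, rfl⟩ := Finset.mem_image.mp hYI
      obtain ⟨hXF, hXe⟩ := Finset.mem_filter.mp hX
      rw [Finset.card_insert_of_notMem hXe, hAcard]
      have := SS.rmin_le hXF
      omega
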